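/- The map θ : Λ_n → 𝔇_n^{catalan} sending λ to D(λ) is a bijection. -/

import Mathlib

def IsLambda (n : ℕ) (l : Fin n → ℕ) : Prop :=
  (∀ i j : Fin n, i ≤ j → l j ≤ l i) ∧
  (∀ i : Fin n, l i + i.val ≤ n - 1) ∧
  (∀ i : Fin n, i.val = n - 1 → l i = 0)

def aseq (n : ℕ) (l : Fin n → ℕ) (i : Fin n) : ℕ := n - 1 - i.val - l i

def bseq (n : ℕ) (l : Fin n → ℕ) (i : Fin n) : ℕ :=
  (Finset.univ.filter (fun j : Fin n => i < j ∧
    (l i + i.val = l j + j.val ∨ l i + i.val = l j + j.val + 1))).card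

def Dof (n : ℕ) (l : Fin n → ℕ) : Finset (ℕ × ℕ) :=
  Finset.image (fun i => (aseq n l i, bseq n l i)) Finset.univ

def col (D : Finset (ℕ × ℕ)) (p : ℕ) : Finset (ℕ × ℕ) :=
  D.filter (fun q => q.1 = p)

/-- Membership in `𝔇_n^{catalan}`: an `n`-element subset of `ℕ × ℕ` satisfying
conditions (a) and (b). -/
def IsCat (n : ℕ) (D : Finset (ℕ × ℕ)) : Prop :=
  D.card = n ∧
  (∀ p i : ℕ, (p, 0) ∈ D → i ≤ p → (i, 0) ∈ D) ∧
  (∀ p : ℕ,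
    ((col D p).Nonempty →
      ((col D p).image Prod.snd).sup id + 1 ≤ (col D (p + 1)).card + (col D p).card) ∧
    (col D p = ∅ → ∀ q ∈ D, q.1 < p))

namespace Stmt5Aux

variable {n : ℕ} {l : Fin n → ℕ}

lemma sumAC (hl : IsLambda n l) (i : Fin n) :
    aseq n l i + (l i + i.val) = n - 1 := by
  have h := hl.2.1 i
  unfold aseq
  omega

lemma mem_Dof {q : ℕ × ℕ} : q ∈ Dof n l ↔ ∃ i : Fin n, (aseq n l i, bseq n l i) = q := by
  simp [Dof]

/-- the filter underlying `bseq`. -/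
def Sb (n : ℕ) (l : Fin n → ℕ) (i : Fin n) : Finset (Fin n) :=
  Finset.univ.filter (fun j : Fin n => i < j ∧
    (l i + i.val = l j + j.val ∨ l i + i.val = l j + j.val + 1))

lemma bseq_eq (i : Fin n) : bseq n l i = (Sb n l i).card := rfl

lemma bseq_lt (hl : IsLambda n l) {i j : Fin n} (hij : i < j)
    (ha : aseq n l i = aseq n l j) : bseq n l j < bseq n l i := by
  have hci := sumAC hl i
  have hcj := sumAC hl j
  have hc : l i + i.val = l j + j.val := by omega
  have hsub : insert j (Sb n l j) ⊆ Sb n l i := by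
    intro k hk
    rcases Finset.mem_insert.mp hk with rfl | hk
    · simp only [Sb, Finset.mem_filter, Finset.mem_univ, true_and]
      exact ⟨hij, Or.inl hc⟩
    · simp only [Sb, Finset.mem_filter, Finset.mem_univ, true_and] at hk ⊢
      exact ⟨lt_trans hij hk.1, by omega⟩
  have hjn : j ∉ Sb n l j := by
    simp [Sb]
  have := Finset.card_le_card hsub
  rw [Finset.card_insert_of_notMem hjn] at this
  rw [bseq_eq, bseq_eq]
  omega

lemma f_injOn (hl : IsLambda n l) {i j : Fin n}
    (h : (aseq n l i, bseq n l i) = (aseq n l j, bseq n l j)) : i = j := by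
  by_contra hne
  rcases lt_or_gt_of_ne hne with hlt | hgt
  · have := bseq_lt hl hlt (by exact congrArg Prod.fst h)
    have hb : bseq n l i = bseq n l j := congrArg Prod.snd h
    omega
  · have := bseq_lt hl hgt (by exact (congrArg Prod.fst h).symm)
    have hb : bseq n l i = bseq n l j := congrArg Prod.snd h
    omega

lemma card_Dof (hl : IsLambda n l) : (Dof n l).card = n := by
  rw [Dof, Finset.card_image_of_injOn (fun i _ j _ h => f_injOn hl h)]
  simp

lemma col_Dof (p : ℕ) :
    col (Dof n l) p =
      (Finset.univ.filter (fun i : Fin n => aseq n l i = p)).image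
        (fun i => (aseq n l i, bseq n l i)) := by
  ext q
  simp only [col, Dof, Finset.mem_filter, Finset.mem_image, Finset.mem_univ, true_and]
  constructor
  · rintro ⟨⟨i, rfl⟩, hq⟩
    exact ⟨i, hq, rfl⟩
  · rintro ⟨i, hi, rfl⟩
    exact ⟨⟨i, rfl⟩, hi⟩

lemma colcard_Dof (hl : IsLambda n l) (p : ℕ) :
    (col (Dof n l) p).card = (Finset.univ.filter (fun i : Fin n => aseq n l i = p)).card := by
  rw [col_Dof]
  exact Finset.card_image_of_injOn (fun i _ j _ h => f_injOn hl h)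


lemma climb (hl : IsLambda n l) (j : Fin n) (v : ℕ) (h1 : l j + j.val ≤ v)
    (h2 : v ≤ n - 1) : ∃ k : Fin n, j ≤ k ∧ l k + k.val = v := by
  have hn : 0 < n := j.pos
  have hjlt := j.isLt
  have hlast : (⟨n - 1, by omega⟩ : Fin n) ∈
      Finset.univ.filter (fun k : Fin n => j ≤ k ∧ v ≤ l k + k.val) := by
    have h0 : l ⟨n - 1, by omega⟩ = 0 := hl.2.2 _ rfl
    simp only [Finset.mem_filter, Finset.mem_univ, true_and]
    refine ⟨Fin.le_def.mpr ?_, ?_⟩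
    · simp; omega
    · simp [h0]; omega
  have hne : (Finset.univ.filter (fun k : Fin n => j ≤ k ∧ v ≤ l k + k.val)).Nonempty :=
    ⟨_, hlast⟩
  obtain ⟨k₀, hk₀S, hk₀min⟩ : ∃ k₀ ∈ Finset.univ.filter
      (fun k : Fin n => j ≤ k ∧ v ≤ l k + k.val), ∀ x ∈ Finset.univ.filter
      (fun k : Fin n => j ≤ k ∧ v ≤ l k + k.val), k₀ ≤ x :=
    ⟨_, Finset.min'_mem _ hne, fun x hx => Finset.min'_le _ x hx⟩
  simp only [Finset.mem_filter, Finset.mem_univ, true_and] at hk₀S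
  obtain ⟨hjk, hvk⟩ := hk₀S
  rcases eq_or_lt_of_le hvk with heq | hlt
  · exact ⟨k₀, hjk, heq.symm⟩
  · exfalso
    have hjk' : j < k₀ := by
      rcases lt_or_eq_of_le hjk with h | h
      · exact h
      · exfalso; rw [← h] at hlt; omega
    have hjkv : j.val < k₀.val := Fin.lt_def.mp hjk'
    have hk'isLt : k₀.val - 1 < n := by have := k₀.isLt; omega
    have hk'lt : (⟨k₀.val - 1, hk'isLt⟩ : Fin n) < k₀ := by
      rw [Fin.lt_def]; simp; omega
    have hk'S : (⟨k₀.val - 1, hk'isLt⟩ : Fin n) ∉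
        Finset.univ.filter (fun k : Fin n => j ≤ k ∧ v ≤ l k + k.val) := by
      intro hmem
      exact absurd (hk₀min _ hmem) (not_le.mpr hk'lt)
    have hjk'' : j ≤ (⟨k₀.val - 1, hk'isLt⟩ : Fin n) := by
      rw [Fin.le_def]; simp; omega
    simp only [Finset.mem_filter, Finset.mem_univ, true_and] at hk'S
    have hck' : l ⟨k₀.val - 1, hk'isLt⟩ + (k₀.val - 1) < v := by
      rcases not_and_or.mp hk'S with h | h
      · exact absurd hjk'' h
      · simp at h; omega
    have hmono : l k₀ ≤ l ⟨k₀.val - 1, hk'isLt⟩ := hl.1 _ _ (le_of_lt hk'lt)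
    omega

lemma lastocc (hl : IsLambda n l) (v : ℕ) (hex : ∃ k : Fin n, l k + k.val = v) :
    ∃ k : Fin n, l k + k.val = v ∧ bseq n l k = 0 := by
  obtain ⟨k₁, hk₁⟩ := hex
  have hvle : v ≤ n - 1 := by have := hl.2.1 k₁; omega
  have hne : (Finset.univ.filter (fun k : Fin n => l k + k.val = v)).Nonempty :=
    ⟨k₁, by simp [hk₁]⟩
  obtain ⟨k₀, hk₀S, hk₀max⟩ : ∃ k₀ ∈ Finset.univ.filter
      (fun k : Fin n => l k + k.val = v), ∀ x ∈ Finset.univ.filter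
      (fun k : Fin n => l k + k.val = v), x ≤ k₀ :=
    ⟨_, Finset.max'_mem _ hne, fun x hx => Finset.le_max' _ x hx⟩
  simp only [Finset.mem_filter, Finset.mem_univ, true_and] at hk₀S
  refine ⟨k₀, hk₀S, ?_⟩
  rw [bseq_eq]
  rw [Finset.card_eq_zero]
  by_contra hSne
  obtain ⟨m, hm⟩ := Finset.nonempty_iff_ne_empty.mpr hSne
  simp only [Sb, Finset.mem_filter, Finset.mem_univ, true_and] at hm
  obtain ⟨hkm, hcond⟩ := hm
  rcases hcond with h | h
  · have : m ≤ k₀ := hk₀max m (by simp; omega)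
    exact absurd hkm (not_lt.mpr this)
  · -- l m + m = v - 1 ; climb from m to v
    obtain ⟨k', hk'm, hk'⟩ := climb hl m v (by omega) hvle
    have : k' ≤ k₀ := hk₀max k' (by simp [hk'])
    have : m ≤ k₀ := le_trans hk'm this
    exact absurd hkm (not_lt.mpr this)

/-- The union of columns `aseq i` and `aseq i + 1` as an index filter. -/
lemma Tcard (hl : IsLambda n l) (i : Fin n) :
    (Finset.univ.filter (fun j : Fin n =>
        aseq n l j = aseq n l i ∨ aseq n l j = aseq n l i + 1)).card
      = (col (Dof n l) (aseq n l i)).card + (col (Dof n l) (aseq n l i + 1)).card := by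
  rw [colcard_Dof hl, colcard_Dof hl, Finset.filter_or]
  rw [Finset.card_union_of_disjoint]
  rw [Finset.disjoint_filter]
  intro x _ hx
  omega

lemma Sb_subset (hl : IsLambda n l) (i : Fin n) :
    insert i (Sb n l i) ⊆ Finset.univ.filter (fun j : Fin n =>
        aseq n l j = aseq n l i ∨ aseq n l j = aseq n l i + 1) := by
  intro k hk
  have hci := sumAC hl i
  simp only [Finset.mem_filter, Finset.mem_univ, true_and]
  rcases Finset.mem_insert.mp hk with rfl | hk
  · left; rfl
  · simp only [Sb, Finset.mem_filter, Finset.mem_univ, true_and] at hk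
    have hck := sumAC hl k
    rcases hk.2 with h | h
    · left; omega
    · right; omega

lemma bseq_bound (hl : IsLambda n l) (i : Fin n) :
    bseq n l i + 1 ≤ (col (Dof n l) (aseq n l i)).card + (col (Dof n l) (aseq n l i + 1)).card := by
  rw [← Tcard hl i]
  have hiS : i ∉ Sb n l i := by simp [Sb]
  have := Finset.card_le_card (Sb_subset hl i)
  rw [Finset.card_insert_of_notMem hiS] at this
  rw [bseq_eq]
  omega

lemma claim1 (hl : IsLambda n l) (hn : 0 < n) :
    bseq n l ⟨0, hn⟩ + 1 =
      (col (Dof n l) (aseq n l ⟨0, hn⟩)).card + (col (Dof n l) (aseq n l ⟨0, hn⟩ + 1)).card := by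
  rw [← Tcard hl ⟨0, hn⟩]
  have hiS : (⟨0, hn⟩ : Fin n) ∉ Sb n l ⟨0, hn⟩ := by simp [Sb]
  have heq : Finset.univ.filter (fun j : Fin n =>
      aseq n l j = aseq n l ⟨0, hn⟩ ∨ aseq n l j = aseq n l ⟨0, hn⟩ + 1)
      = insert ⟨0, hn⟩ (Sb n l ⟨0, hn⟩) := by
    refine Finset.Subset.antisymm ?_ (Sb_subset hl ⟨0, hn⟩)
    intro k hk
    simp only [Finset.mem_filter, Finset.mem_univ, true_and] at hk
    rcases eq_or_ne k ⟨0, hn⟩ with rfl | hne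
    · exact Finset.mem_insert_self _ _
    · refine Finset.mem_insert_of_mem ?_
      simp only [Sb, Finset.mem_filter, Finset.mem_univ, true_and]
      have hlt : (⟨0, hn⟩ : Fin n) < k := by
        rw [Fin.lt_def]
        have : k.val ≠ 0 := fun h => hne (Fin.ext h)
        simp; omega
      have hc0 := sumAC hl ⟨0, hn⟩
      have hck := sumAC hl k
      have hv0 : (⟨0, hn⟩ : Fin n).val = 0 := rfl
      refine ⟨hlt, ?_⟩
      rcases hk with h | h
      · left; omega
      · right; omega
  rw [heq, Finset.card_insert_of_notMem hiS, bseq_eq]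

lemma claim2 (hl : IsLambda n l) (hn : 0 < n) (i : Fin n)
    (hb : bseq n l i + 1 =
      (col (Dof n l) (aseq n l i)).card + (col (Dof n l) (aseq n l i + 1)).card) :
    aseq n l ⟨0, hn⟩ ≤ aseq n l i := by
  -- from hb : T = insert i (Sb i)
  have hiS : i ∉ Sb n l i := by simp [Sb]
  have hTeq : Finset.univ.filter (fun j : Fin n =>
      aseq n l j = aseq n l i ∨ aseq n l j = aseq n l i + 1) = insert i (Sb n l i) := by
    refine (Finset.eq_of_subset_of_card_le (Sb_subset hl i) ?_).symm
    rw [Tcard hl i, Finset.card_insert_of_notMem hiS, ← bseq_eq]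
    omega
  have hkey : ∀ j : Fin n, (aseq n l j = aseq n l i ∨ aseq n l j = aseq n l i + 1) → i ≤ j := by
    intro j hj
    have : j ∈ insert i (Sb n l i) := by
      rw [← hTeq]; simp only [Finset.mem_filter, Finset.mem_univ, true_and]; exact hj
    rcases Finset.mem_insert.mp this with rfl | hmem
    · exact le_refl _
    · simp only [Sb, Finset.mem_filter, Finset.mem_univ, true_and] at hmem
      exact le_of_lt hmem.1
  by_contra hcon
  push_neg at hcon
  have hc0 := sumAC hl ⟨0, hn⟩
  have hci := sumAC hl i
  -- c_0 < c_i
  have hc0i : l ⟨0, hn⟩ + (⟨0, hn⟩ : Fin n).val < l i + i.val := by omega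
  have hipos : 0 < i.val := by
    rcases Nat.eq_zero_or_pos i.val with h | h
    · exfalso
      have : i = ⟨0, hn⟩ := Fin.ext h
      rw [this] at hc0i; omega
    · exact h
  -- the set S of j < i with c_i ≤ c_j + 1
  have hi1lt : i.val - 1 < n := by have := i.isLt; omega
  have hmem1 : (⟨i.val - 1, hi1lt⟩ : Fin n) ∈ Finset.univ.filter
      (fun j : Fin n => j < i ∧ l i + i.val ≤ l j + j.val + 1) := by
    have hv : (⟨i.val - 1, hi1lt⟩ : Fin n).val = i.val - 1 := rfl
    have hmono : l i ≤ l ⟨i.val - 1, hi1lt⟩ := hl.1 _ _ (Fin.le_def.mpr (by omega))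
    simp only [Finset.mem_filter, Finset.mem_univ, true_and]
    constructor
    · rw [Fin.lt_def]; omega
    · omega
  obtain ⟨j₀, hj₀S, hj₀min⟩ : ∃ j₀ ∈ Finset.univ.filter
      (fun j : Fin n => j < i ∧ l i + i.val ≤ l j + j.val + 1), ∀ x ∈ Finset.univ.filter
      (fun j : Fin n => j < i ∧ l i + i.val ≤ l j + j.val + 1), j₀ ≤ x :=
    ⟨_, Finset.min'_mem _ ⟨_, hmem1⟩, fun x hx => Finset.min'_le _ x hx⟩
  simp only [Finset.mem_filter, Finset.mem_univ, true_and] at hj₀S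
  obtain ⟨hj₀i, hj₀c⟩ := hj₀S
  have hcj₀ := sumAC hl j₀
  -- case: c_j₀ ∈ {c_i - 1, c_i} → contradiction via hkey
  by_cases hcase : l j₀ + j₀.val ≤ l i + i.val
  · have : aseq n l j₀ = aseq n l i ∨ aseq n l j₀ = aseq n l i + 1 := by omega
    exact absurd (hkey j₀ this) (not_le.mpr hj₀i)
  · -- c_j₀ ≥ c_i + 1
    push_neg at hcase
    have hj₀pos : 0 < j₀.val := by
      rcases Nat.eq_zero_or_pos j₀.val with h | h
      · exfalso
        have : j₀ = ⟨0, hn⟩ := Fin.ext h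
        rw [this] at hcase; omega
      · exact h
    have hj1lt : j₀.val - 1 < n := by have := j₀.isLt; omega
    have hj'lt : (⟨j₀.val - 1, hj1lt⟩ : Fin n) < j₀ := by rw [Fin.lt_def]; simp; omega
    have hj'ni : (⟨j₀.val - 1, hj1lt⟩ : Fin n) ∉ Finset.univ.filter
        (fun j : Fin n => j < i ∧ l i + i.val ≤ l j + j.val + 1) := by
      intro hmem
      exact absurd (hj₀min _ hmem) (not_le.mpr hj'lt)
    simp only [Finset.mem_filter, Finset.mem_univ, true_and] at hj'ni
    have hj'i : (⟨j₀.val - 1, hj1lt⟩ : Fin n) < i := lt_trans hj'lt hj₀i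
    have hj'c : l i + i.val > l ⟨j₀.val - 1, hj1lt⟩ + (j₀.val - 1) + 1 := by
      rcases not_and_or.mp hj'ni with h | h
      · exact absurd hj'i h
      · simp at h; omega
    have hmono : l j₀ ≤ l ⟨j₀.val - 1, hj1lt⟩ := hl.1 _ _ (le_of_lt hj'lt)
    omega


lemma mapsTo (hl : IsLambda n l) (hn : 1 ≤ n) : IsCat n (Dof n l) := by
  refine ⟨card_Dof hl, ?_, ?_⟩
  · -- condition (a)
    intro p i hp hip
    rw [mem_Dof] at hp
    obtain ⟨j, hj⟩ := hp
    have hpj : aseq n l j = p := congrArg Prod.fst hj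
    have hcj := sumAC hl j
    have hple : p ≤ n - 1 := by omega
    have hile : i ≤ n - 1 := by omega
    obtain ⟨k, _, hk⟩ := climb hl j (n - 1 - i) (by omega) (by omega)
    obtain ⟨k', hk'c, hk'b⟩ := lastocc hl (n - 1 - i) ⟨k, hk⟩
    have hck' := sumAC hl k'
    have hak' : aseq n l k' = i := by omega
    rw [mem_Dof]
    exact ⟨k', by rw [hak', hk'b]⟩
  · intro p
    constructor
    · -- condition (b1)
      intro hne
      obtain ⟨b, hbmem, hbsup⟩ := Finset.exists_mem_eq_sup
        ((col (Dof n l) p).image Prod.snd) (hne.image _) id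
      rw [hbsup]
      simp only [Finset.mem_image] at hbmem
      obtain ⟨q, hq, hqb⟩ := hbmem
      rw [col_Dof] at hq
      simp only [Finset.mem_image, Finset.mem_filter, Finset.mem_univ, true_and] at hq
      obtain ⟨j, hja, hjq⟩ := hq
      have := bseq_bound hl j
      have hbj : b = bseq n l j := by rw [← hqb, ← hjq]
      rw [hja] at this
      simp only [id, hbj]
      omega
    · -- condition (b2)
      intro hemp q hq
      rw [mem_Dof] at hq
      obtain ⟨j, hj⟩ := hq
      have hcj := sumAC hl j
      by_contra hcon
      push_neg at hcon
      have hq1 : q.1 = aseq n l j := by rw [← hj]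
      -- q.1 ≥ p, so c_j ≤ n-1-p; climb to n-1-p
      have hple : p ≤ n - 1 := by omega
      obtain ⟨k, _, hk⟩ := climb hl j (n - 1 - p) (by omega) (by omega)
      have hck := sumAC hl k
      have hak : aseq n l k = p := by omega
      have : (aseq n l k, bseq n l k) ∈ col (Dof n l) p := by
        simp only [col, Finset.mem_filter]
        exact ⟨mem_Dof.mpr ⟨k, rfl⟩, hak⟩
      rw [hemp] at this
      exact absurd this (Finset.notMem_empty _)


-- abstract IsCat lemmas
lemma mem_col {D : Finset (ℕ × ℕ)} {p : ℕ} {q : ℕ × ℕ} :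
    q ∈ col D p ↔ q ∈ D ∧ q.1 = p := by simp [col]

lemma col_erase (D : Finset (ℕ × ℕ)) (pt : ℕ × ℕ) (p : ℕ) :
    col (D.erase pt) p = (col D p).erase pt := by
  ext q
  simp only [mem_col, Finset.mem_erase]
  tauto

lemma col_erase_ne {D : Finset (ℕ × ℕ)} {pt : ℕ × ℕ} {p : ℕ} (h : pt.1 ≠ p) :
    col (D.erase pt) p = col D p := by
  rw [col_erase]
  apply Finset.erase_eq_of_notMem
  rw [mem_col]
  rintro ⟨-, h2⟩
  exact h h2

lemma snd_image_card {D : Finset (ℕ × ℕ)} {p : ℕ} :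
    ((col D p).image Prod.snd).card = (col D p).card := by
  apply Finset.card_image_of_injOn
  intro q1 hq1 q2 hq2 h
  simp only [Finset.coe_filter, col, Set.mem_setOf_eq] at hq1 hq2
  exact Prod.ext (hq1.2.trans hq2.2.symm) h

lemma maxcol_struct {m : ℕ} {D : Finset (ℕ × ℕ)} (hD : IsCat m D) (hne : D.Nonempty) :
    ∃ P, col D (P + 1) = ∅ ∧ (col D P).image Prod.snd = Finset.range (col D P).card ∧
      (col D P).Nonempty ∧ ∀ q ∈ D, q.1 ≤ P := by
  have hne' : (D.image Prod.fst).Nonempty := hne.image _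
  set P := (D.image Prod.fst).max' hne' with hP
  have hle : ∀ q ∈ D, q.1 ≤ P := fun q hq =>
    Finset.le_max' _ _ (Finset.mem_image_of_mem _ hq)
  have hcolP : (col D P).Nonempty := by
    obtain ⟨p, hp⟩ := Finset.mem_image.mp ((D.image Prod.fst).max'_mem hne')
    exact ⟨p, mem_col.mpr ⟨hp.1, hp.2⟩⟩
  have hPemp : col D (P + 1) = ∅ := by
    rw [Finset.eq_empty_iff_forall_notMem]
    intro q hq
    rw [mem_col] at hq
    have := hle q hq.1
    omega
  refine ⟨P, hPemp, ?_, hcolP, hle⟩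
  have hsup := (hD.2.2 P).1 hcolP
  rw [hPemp] at hsup
  simp only [Finset.card_empty, Nat.zero_add] at hsup
  have hsub : (col D P).image Prod.snd ⊆ Finset.range (col D P).card := by
    intro b hb
    have := Finset.le_sup (f := id) hb
    simp only [id] at this
    rw [Finset.mem_range]
    omega
  apply Finset.eq_of_subset_of_card_le hsub
  rw [Finset.card_range, snd_image_card]

lemma allCols0 {m : ℕ} {D : Finset (ℕ × ℕ)} (hD : IsCat m D) (hne : D.Nonempty) :
    ∀ p, (col D p).Nonempty → (p, 0) ∈ D := by
  obtain ⟨P, hPemp, hrange, hcolP, hle⟩ := maxcol_struct hD hne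
  have h0 : (P, 0) ∈ D := by
    have : (0 : ℕ) ∈ (col D P).image Prod.snd := by
      rw [hrange, Finset.mem_range]
      exact Finset.card_pos.mpr hcolP
    obtain ⟨q, hq, hq2⟩ := Finset.mem_image.mp this
    rw [mem_col] at hq
    have : q = (P, 0) := Prod.ext hq.2 hq2
    rw [← this]; exact hq.1
  intro p hp
  obtain ⟨q, hq⟩ := hp
  rw [mem_col] at hq
  exact hD.2.1 P p h0 (by have := hle q hq.1; omega)

lemma colbound {m : ℕ} {D : Finset (ℕ × ℕ)} (hD : IsCat m D) :
    ∀ q ∈ D, q.1 + 1 ≤ m := by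
  intro q hq
  have hic : ∀ i ≤ q.1, (i, 0) ∈ D := by
    intro i hi
    have h0 : (q.1, 0) ∈ D := allCols0 hD ⟨q, hq⟩ q.1 ⟨q, mem_col.mpr ⟨hq, rfl⟩⟩
    exact hD.2.1 q.1 i h0 hi
  have hsub : (Finset.range (q.1 + 1)).image (fun i => (i, 0)) ⊆ D := by
    intro x hx
    simp only [Finset.mem_image, Finset.mem_range] at hx
    obtain ⟨i, hi, rfl⟩ := hx
    exact hic i (by omega)
  have hcard := Finset.card_le_card hsub
  rw [Finset.card_image_of_injective _ (fun a b h => (Prod.ext_iff.mp h).1),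
    Finset.card_range, hD.1] at hcard
  exact hcard

lemma cand_exists {m : ℕ} {D : Finset (ℕ × ℕ)} (hD : IsCat m D) (hne : D.Nonempty) :
    ∃ q ∈ D, q.2 + 1 = (col D q.1).card + (col D (q.1 + 1)).card := by
  obtain ⟨P, hPemp, hrange, hcolP, hle⟩ := maxcol_struct hD hne
  have hpos : 0 < (col D P).card := Finset.card_pos.mpr hcolP
  have : (col D P).card - 1 ∈ (col D P).image Prod.snd := by
    rw [hrange, Finset.mem_range]; omega
  obtain ⟨q, hq, hq2⟩ := Finset.mem_image.mp this
  rw [mem_col] at hq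
  refine ⟨q, hq.1, ?_⟩
  rw [hq.2, hPemp]
  simp only [Finset.card_empty]
  omega


lemma erase_isCat {m : ℕ} (hm : 1 ≤ m) {D : Finset (ℕ × ℕ)} (hD : IsCat (m + 1) D)
    {pt : ℕ × ℕ} (hpt : pt ∈ D)
    (hcand : pt.2 + 1 = (col D pt.1).card + (col D (pt.1 + 1)).card)
    (hmin : ∀ q ∈ D, q.2 + 1 = (col D q.1).card + (col D (q.1 + 1)).card → pt.1 ≤ q.1) :
    IsCat m (D.erase pt) := by
  have hDne : D.Nonempty := ⟨pt, hpt⟩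
  have hptcol : pt ∈ col D pt.1 := mem_col.mpr ⟨hpt, rfl⟩
  have hcolpos : 0 < (col D pt.1).card := Finset.card_pos.mpr ⟨pt, hptcol⟩
  have hcard' : ∀ p, pt.1 ≠ p → col (D.erase pt) p = col D p := fun p h => col_erase_ne h
  have hcardp₀ : (col (D.erase pt) pt.1).card = (col D pt.1).card - 1 := by
    rw [col_erase, Finset.card_erase_of_mem hptcol]
  refine ⟨?_, ?_, ?_⟩
  · rw [Finset.card_erase_of_mem hpt, hD.1]
    omega
  · -- condition (a)
    intro p i hp hip
    rw [Finset.mem_erase] at hp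
    have hiD : (i, 0) ∈ D := hD.2.1 p i hp.2 hip
    rw [Finset.mem_erase]
    refine ⟨?_, hiD⟩
    intro heq
    have h1 : pt.1 = i := by rw [← heq]
    have h2 : pt.2 = 0 := by rw [← heq]
    have hb0 : (col D pt.1).card = 1 ∧ (col D (pt.1 + 1)).card = 0 := by
      constructor <;> omega
    have hcol1 : col D pt.1 = {pt} :=
      Finset.card_eq_one.mp hb0.1 |>.elim (fun a ha => by
        rw [ha] at hptcol; rw [ha, Finset.mem_singleton.mp hptcol])
    -- p ≠ pt.1
    have hppt : p ≠ pt.1 := by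
      intro hpe
      have : (p, 0) ∈ col D pt.1 := mem_col.mpr ⟨hp.2, hpe⟩
      rw [hcol1] at this
      exact hp.1 (Finset.mem_singleton.mp this)
    -- so p > pt.1 = i; but col D (pt.1+1) = ∅ forces p < pt.1+1
    have hemp : col D (pt.1 + 1) = ∅ := Finset.card_eq_zero.mp hb0.2
    have := (hD.2.2 (pt.1 + 1)).2 hemp (p, 0) hp.2
    simp only at this
    omega
  · intro p
    constructor
    · -- (b1)
      intro hne
      rcases eq_or_ne pt.1 p with rfl | hneq
      · -- p = pt.1
        have h2le : 2 ≤ (col D pt.1).card := by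
          rw [col_erase] at hne
          obtain ⟨q, hq⟩ := hne
          have hqmem := Finset.mem_of_mem_erase hq
          have hqne := Finset.ne_of_mem_erase hq
          exact Finset.one_lt_card.mpr ⟨q, hqmem, pt, hptcol, hqne⟩
        have hble : 1 ≤ pt.2 := by omega
        have hsup : ((col (D.erase pt) pt.1).image Prod.snd).sup id < pt.2 := by
          rw [Finset.sup_lt_iff (by simp only [bot_eq_zero]; omega : (⊥ : ℕ) < pt.2)]
          intro b hb
          obtain ⟨q, hq, hqb⟩ := Finset.mem_image.mp hb
          rw [col_erase, Finset.mem_erase] at hq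
          obtain ⟨hqpt, hqcol⟩ := hq
          have hqD := (mem_col.mp hqcol).1
          have hq1 : q.1 = pt.1 := (mem_col.mp hqcol).2
          -- b ≤ sup over col D pt.1 ≤ card sums - 1 = pt.2
          have hs := (hD.2.2 pt.1).1 ⟨pt, hptcol⟩
          have hmem : q.2 ∈ (col D pt.1).image Prod.snd := Finset.mem_image_of_mem _ hqcol
          have hle2 := Finset.le_sup (f := id) hmem
          simp only [id] at hle2 hs ⊢
          have hbne : q.2 ≠ pt.2 := by
            intro h
            exact hqpt (Prod.ext hq1 h)
          omega
        have : ((col (D.erase pt) pt.1).image Prod.snd).sup id + 1 ≤ pt.2 := hsup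
        rw [hcard' (pt.1 + 1) (by omega), hcardp₀]
        omega
      · rcases eq_or_ne (p + 1) pt.1 with hpp | hpp2
        · -- p + 1 = pt.1 : use minimality to get strictness
          rw [hcard' p hneq] at hne ⊢
          obtain ⟨b, hbmem, hbsup⟩ := Finset.exists_mem_eq_sup
            ((col D p).image Prod.snd) (hne.image _) id
          obtain ⟨q, hqcol, hq2⟩ := Finset.mem_image.mp hbmem
          have hqD := (mem_col.mp hqcol).1
          have hq1 : q.1 = p := (mem_col.mp hqcol).2
          have hs := (hD.2.2 p).1 hne
          have hnotcand : q.2 + 1 ≠ (col D q.1).card + (col D (q.1 + 1)).card := by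
            intro h
            have := hmin q hqD h
            omega
          rw [hq1] at hnotcand
          have hle2 : q.2 + 1 ≤ (col D (p + 1)).card + (col D p).card := by
            have h1 := Finset.le_sup (f := id) hbmem
            simp only [id] at h1 hs
            omega
          rw [← hpp] at hcardp₀
          rw [hbsup]
          simp only [id]
          rw [← hq2, hcardp₀]
          have hc1pos : 0 < (col D (p + 1)).card := by rw [hpp]; exact hcolpos
          omega
        · -- untouched columns
          rw [hcard' p hneq, hcard' (p + 1) (Ne.symm (by omega))] at *
          exact (hD.2.2 p).1 hne
    · -- (b2)
      intro hemp q hq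
      have hqD := Finset.mem_of_mem_erase hq
      have hqpt := Finset.ne_of_mem_erase hq
      rcases eq_or_ne pt.1 p with rfl | hneq
      · -- col D pt.1 = {pt}
        rw [col_erase] at hemp
        have hcol1 : col D pt.1 = {pt} := by
          have hsub : col D pt.1 ⊆ {pt} := by
            intro x hx
            rcases eq_or_ne x pt with rfl | hxne
            · exact Finset.mem_singleton_self _
            · exfalso
              have : x ∈ (col D pt.1).erase pt := Finset.mem_erase.mpr ⟨hxne, hx⟩
              rw [hemp] at this
              exact Finset.notMem_empty _ this
          exact Finset.Subset.antisymm hsub (Finset.singleton_subset_iff.mpr hptcol)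
        have hcard1 : (col D pt.1).card = 1 := by rw [hcol1]; simp
        have hpt2 : pt.2 = (col D (pt.1 + 1)).card := by omega
        have h0 : (pt.1, 0) ∈ D := allCols0 hD hDne pt.1 ⟨pt, hptcol⟩
        have hpt0 : pt = (pt.1, 0) := by
          have : (pt.1, 0) ∈ col D pt.1 := mem_col.mpr ⟨h0, rfl⟩
          rw [hcol1] at this
          exact (Finset.mem_singleton.mp this).symm
        have hc10 : (col D (pt.1 + 1)).card = 0 := by
          have : pt.2 = 0 := by rw [hpt0]
          omega
        have hce : col D (pt.1 + 1) = ∅ := Finset.card_eq_zero.mp hc10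
        have := (hD.2.2 (pt.1 + 1)).2 hce q hqD
        have hq1ne : q.1 ≠ pt.1 := by
          intro h
          have : q ∈ col D pt.1 := mem_col.mpr ⟨hqD, h⟩
          rw [hcol1] at this
          exact hqpt (Finset.mem_singleton.mp this)
        omega
      · rw [hcard' p hneq] at hemp
        exact (hD.2.2 p).2 hemp q hqD


def tl {m : ℕ} (l : Fin (m + 1) → ℕ) : Fin m → ℕ := fun i => l i.succ

lemma tl_isLambda {m : ℕ} {l : Fin (m + 1) → ℕ} (hl : IsLambda (m + 1) l) :
    IsLambda m (tl l) := by
  refine ⟨?_, ?_, ?_⟩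
  · intro i j hij
    exact hl.1 i.succ j.succ (by rw [Fin.le_def] at hij ⊢; simp; omega)
  · intro i
    have := hl.2.1 i.succ
    have hm : 0 < m := i.pos
    simp only [Fin.val_succ] at this
    simp only [tl]
    omega
  · intro i hi
    have hm : 0 < m := i.pos
    exact hl.2.2 i.succ (by simp [Fin.val_succ]; omega)

lemma aseq_tl {m : ℕ} (l : Fin (m + 1) → ℕ) (j : Fin m) :
    aseq m (tl l) j = aseq (m + 1) l j.succ := by
  simp only [aseq, tl, Fin.val_succ]
  omega

lemma card_filter_succ {m : ℕ} (P : Fin (m + 1) → Prop) [DecidablePred P] :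
    (Finset.univ.filter (fun k : Fin (m + 1) => 0 < k ∧ P k)).card
      = (Finset.univ.filter (fun j : Fin m => P j.succ)).card := by
  rw [eq_comm]
  apply Finset.card_bij (fun j _ => j.succ)
  · intro j hj
    simp only [Finset.mem_filter, Finset.mem_univ, true_and] at hj ⊢
    exact ⟨Fin.succ_pos j, hj⟩
  · intro a _ b _ h
    exact Fin.succ_injective _ h
  · intro k hk
    simp only [Finset.mem_filter, Finset.mem_univ, true_and] at hk
    induction k using Fin.cases with
    | zero => exact absurd hk.1 (lt_irrefl _)
    | succ j => exact ⟨j, by simp [hk.2], rfl⟩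

lemma bseq_tl {m : ℕ} (l : Fin (m + 1) → ℕ) (j : Fin m) :
    bseq m (tl l) j = bseq (m + 1) l j.succ := by
  rw [bseq, bseq]
  have : (Finset.univ.filter (fun k : Fin (m + 1) => j.succ < k ∧
      (l j.succ + (j.succ : Fin (m + 1)).val = l k + k.val ∨
       l j.succ + (j.succ : Fin (m + 1)).val = l k + k.val + 1))).card
      = (Finset.univ.filter (fun k : Fin (m + 1) => 0 < k ∧ (j.succ < k ∧
      (l j.succ + (j.succ : Fin (m + 1)).val = l k + k.val ∨
       l j.succ + (j.succ : Fin (m + 1)).val = l k + k.val + 1)))).card := by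
    congr 1
    apply Finset.filter_congr
    intro k _
    constructor
    · intro hk
      exact ⟨lt_of_le_of_lt (Fin.zero_le _) hk.1, hk⟩
    · intro hk
      exact hk.2
  rw [this, card_filter_succ]
  congr 1
  apply Finset.filter_congr
  intro k _
  simp only [tl, Fin.val_succ, Fin.succ_lt_succ_iff]
  constructor
  · rintro ⟨h1, h2⟩
    exact ⟨h1, by omega⟩
  · rintro ⟨h1, h2⟩
    exact ⟨h1, by omega⟩

lemma Dof_succ {m : ℕ} (l : Fin (m + 1) → ℕ) :
    Dof (m + 1) l = insert (aseq (m + 1) l 0, bseq (m + 1) l 0) (Dof m (tl l)) := by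
  rw [Dof, Fin.univ_succ, Finset.cons_eq_insert, Finset.image_insert, Finset.map_eq_image, Finset.image_image]
  congr 1
  rw [Dof]
  apply Finset.image_congr
  intro j _
  simp only [Function.comp]
  rw [aseq_tl, bseq_tl]
  rfl

lemma bseq_zero {m : ℕ} {l : Fin (m + 1) → ℕ} (hl : IsLambda (m + 1) l) :
    bseq (m + 1) l 0 = (col (Dof m (tl l)) (aseq (m + 1) l 0)).card
      + (col (Dof m (tl l)) (aseq (m + 1) l 0 + 1)).card := by
  have hl' := tl_isLambda hl
  rw [colcard_Dof hl', colcard_Dof hl']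
  rw [bseq]
  have h1 : (Finset.univ.filter (fun k : Fin (m + 1) => (0 : Fin (m+1)) < k ∧
      (l 0 + ((0 : Fin (m+1)) : Fin (m + 1)).val = l k + k.val ∨
       l 0 + ((0 : Fin (m+1)) : Fin (m + 1)).val = l k + k.val + 1))).card
      = (Finset.univ.filter (fun j : Fin m =>
          aseq m (tl l) j = aseq (m + 1) l 0 ∨
          aseq m (tl l) j = aseq (m + 1) l 0 + 1)).card := by
    rw [card_filter_succ]
    congr 1
    apply Finset.filter_congr
    intro j _
    have hc0 := sumAC hl 0
    have hck := sumAC hl j.succ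
    have hv0 : ((0 : Fin (m + 1)) : Fin (m+1)).val = 0 := rfl
    simp only [aseq_tl, tl, Fin.val_succ]
    simp only [Fin.val_succ] at hck
    constructor
    · rintro (h | h)
      · left; omega
      · right; omega
    · rintro (h | h)
      · left; omega
      · right; omega
  rw [h1, Finset.filter_or, Finset.card_union_of_disjoint]
  rw [Finset.disjoint_filter]
  intro x _ hx
  omega

lemma head_notmem {m : ℕ} {l : Fin (m + 1) → ℕ} (hl : IsLambda (m + 1) l) :
    (aseq (m + 1) l 0, bseq (m + 1) l 0) ∉ Dof m (tl l) := by
  intro hmem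
  rw [mem_Dof] at hmem
  obtain ⟨j, hj⟩ := hmem
  have hl' := tl_isLambda hl
  have hb := bseq_bound hl' j
  have ha : aseq m (tl l) j = aseq (m + 1) l 0 := congrArg Prod.fst hj
  have hbj : bseq m (tl l) j = bseq (m + 1) l 0 := congrArg Prod.snd hj
  rw [ha, hbj, bseq_zero hl] at hb
  omega


lemma dof_one : Dof 1 (fun _ => 0) = {((0 : ℕ), (0 : ℕ))} := by
  decide

lemma surj : ∀ (n : ℕ), 1 ≤ n → ∀ D : Finset (ℕ × ℕ), IsCat n D →
    ∃ l : Fin n → ℕ, IsLambda n l ∧ Dof n l = D := by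
  intro n hn
  induction n, hn using Nat.le_induction with
  | base =>
    intro D hD
    refine ⟨fun _ => 0, ⟨fun i j _ => le_refl _,
      fun i => by have := i.isLt; show (0 : ℕ) + i.val ≤ 1 - 1; omega, fun i _ => rfl⟩, ?_⟩
    rw [dof_one]
    obtain ⟨q, hq⟩ := Finset.card_eq_one.mp hD.1
    have hqD : q ∈ D := by rw [hq]; exact Finset.mem_singleton_self _
    have hq1 : q.1 = 0 := by have := colbound hD q hqD; omega
    have hq2 : q.2 = 0 := by
      have hcol0 : (col D 0).Nonempty := ⟨q, mem_col.mpr ⟨hqD, hq1⟩⟩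
      have hs := (hD.2.2 0).1 hcol0
      have hcol1 : col D 1 = ∅ := by
        rw [Finset.eq_empty_iff_forall_notMem]
        intro x hx
        rw [mem_col] at hx
        have := colbound hD x hx.1
        omega
      have hmem : q.2 ∈ (col D 0).image Prod.snd :=
        Finset.mem_image_of_mem _ (mem_col.mpr ⟨hqD, hq1⟩)
      have := Finset.le_sup (f := id) hmem
      rw [hcol1] at hs
      have hcle : (col D 0).card ≤ 1 := by
        have h1 : (col D 0).card ≤ D.card := Finset.card_le_card (Finset.filter_subset _ _)
        rw [hD.1] at h1
        exact h1
      simp only [Finset.card_empty, id] at hs this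
      omega
    rw [hq]
    congr 1
    exact (Prod.ext hq1 hq2).symm
  | succ m hm IH =>
    intro D hD
    have hne : D.Nonempty := by
      rw [← Finset.card_pos, hD.1]; omega
    obtain ⟨q0, hq0, hq0c⟩ := cand_exists hD hne
    have hFne : ((D.filter (fun q => q.2 + 1 = (col D q.1).card + (col D (q.1 + 1)).card)).image
        Prod.fst).Nonempty :=
      ⟨q0.1, Finset.mem_image_of_mem _ (Finset.mem_filter.mpr ⟨hq0, hq0c⟩)⟩
    obtain ⟨pt, hptF, hpt1⟩ := Finset.mem_image.mp (Finset.min'_mem _ hFne)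
    rw [Finset.mem_filter] at hptF
    obtain ⟨hptD, hcand⟩ := hptF
    have hmin : ∀ q ∈ D, q.2 + 1 = (col D q.1).card + (col D (q.1 + 1)).card → pt.1 ≤ q.1 := by
      intro q hq hqc
      rw [hpt1]
      exact Finset.min'_le _ _ (Finset.mem_image_of_mem _ (Finset.mem_filter.mpr ⟨hq, hqc⟩))
    have hcolpos : 0 < (col D pt.1).card := Finset.card_pos.mpr ⟨pt, mem_col.mpr ⟨hptD, rfl⟩⟩
    have hIC' : IsCat m (D.erase pt) := erase_isCat hm hD hptD hcand hmin
    obtain ⟨l', hl', hDl'⟩ := IH (D.erase pt) hIC'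
    have hple : pt.1 + 1 ≤ m + 1 := colbound hD pt hptD
    have hl'b := hl'.2.1 ⟨0, hm⟩
    have hv0 : ((⟨0, hm⟩ : Fin m)).val = 0 := rfl
    -- (iii): l' 0 + pt.1 ≤ m
    have hiii : l' ⟨0, hm⟩ + pt.1 ≤ m := by
      by_contra hcon
      push_neg at hcon
      have hc1 := claim1 hl' hm
      rw [hDl'] at hc1
      have hsum := sumAC hl' ⟨0, hm⟩
      have h2 : aseq m l' ⟨0, hm⟩ + 2 ≤ pt.1 := by omega
      rw [col_erase_ne (by omega), col_erase_ne (by omega)] at hc1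
      have hmem : (aseq m l' ⟨0, hm⟩, bseq m l' ⟨0, hm⟩) ∈ D.erase pt := by
        rw [← hDl']
        exact mem_Dof.mpr ⟨_, rfl⟩
      have := hmin _ (Finset.mem_of_mem_erase hmem) (by simpa using hc1)
      simp only at this
      omega
    have hlL : IsLambda (m + 1) (fun i => Fin.cases (m - pt.1) l' i) := by
      refine ⟨?_, ?_, ?_⟩
      · intro i j hij
        induction i using Fin.cases with
        | zero =>
          induction j using Fin.cases with
          | zero => exact le_refl _
          | succ j =>
            simp only [Fin.cases_zero, Fin.cases_succ]
            have : l' j ≤ l' ⟨0, hm⟩ := hl'.1 ⟨0, hm⟩ j (Fin.le_def.mpr (by omega))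
            omega
        | succ i =>
          induction j using Fin.cases with
          | zero =>
            exfalso
            rw [Fin.le_def] at hij
            simp [Fin.val_succ] at hij
          | succ j =>
            simp only [Fin.cases_succ]
            refine hl'.1 i j ?_
            rw [Fin.le_def] at hij ⊢
            simp only [Fin.val_succ] at hij
            omega
      · intro i
        induction i using Fin.cases with
        | zero => simp only [Fin.cases_zero, Fin.val_zero]; omega
        | succ i =>
          simp only [Fin.cases_succ, Fin.val_succ]
          have := hl'.2.1 i
          omega
      · intro i hi
        induction i using Fin.cases with
        | zero => simp only [Fin.val_zero] at hi; omega
        | succ i =>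
          simp only [Fin.val_succ] at hi
          simp only [Fin.cases_succ]
          exact hl'.2.2 i (by omega)
    refine ⟨fun i => Fin.cases (m - pt.1) l' i, hlL, ?_⟩
    rw [Dof_succ]
    have htl : tl (fun i => Fin.cases (m - pt.1) l' i) = l' := by
      funext i
      simp [tl]
    have ha0 : aseq (m + 1) (fun i => Fin.cases (m - pt.1) l' i) 0 = pt.1 := by
      simp only [aseq, Fin.cases_zero, Fin.val_zero]
      omega
    have hb0 : bseq (m + 1) (fun i => Fin.cases (m - pt.1) l' i) 0 = pt.2 := by
      rw [bseq_zero hlL, htl, hDl', ha0]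
      rw [col_erase, Finset.card_erase_of_mem (mem_col.mpr ⟨hptD, rfl⟩),
        col_erase_ne (by omega)]
      omega
    rw [htl, hDl', ha0, hb0]
    exact Finset.insert_erase hptD

lemma inj : ∀ (n : ℕ), 1 ≤ n → ∀ l k : Fin n → ℕ, IsLambda n l → IsLambda n k →
    Dof n l = Dof n k → l = k := by
  intro n hn
  induction n, hn using Nat.le_induction with
  | base =>
    intro l k hl hk _
    funext i
    have hi : i.val = 0 := by have := i.isLt; omega
    rw [hl.2.2 i hi, hk.2.2 i hi]
  | succ m hm IH =>
    intro l k hl hk hDeq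
    have h0m : (0 : Fin (m + 1)) = ⟨0, Nat.succ_pos m⟩ := rfl
    -- k's head is in Dof l
    have hkmem : (aseq (m + 1) k 0, bseq (m + 1) k 0) ∈ Dof (m + 1) l := by
      rw [hDeq]; exact mem_Dof.mpr ⟨0, rfl⟩
    obtain ⟨i, hi⟩ := mem_Dof.mp hkmem
    have hia : aseq (m + 1) l i = aseq (m + 1) k 0 := congrArg Prod.fst hi
    have hib : bseq (m + 1) l i = bseq (m + 1) k 0 := congrArg Prod.snd hi
    have hc1k := claim1 hk (Nat.succ_pos m)
    have hc1l := claim1 hl (Nat.succ_pos m)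
    rw [← h0m, ← hDeq] at hc1k
    have hbi : bseq (m + 1) l i + 1 = (col (Dof (m + 1) l) (aseq (m + 1) l i)).card
        + (col (Dof (m + 1) l) (aseq (m + 1) l i + 1)).card := by
      rw [hia, hib]; exact hc1k
    have hle1 : aseq (m + 1) l ⟨0, Nat.succ_pos m⟩ ≤ aseq (m + 1) k 0 := by
      rw [← hia]; exact claim2 hl (Nat.succ_pos m) i hbi
    -- symmetric
    have hlmem : (aseq (m + 1) l 0, bseq (m + 1) l 0) ∈ Dof (m + 1) k := by
      rw [← hDeq]; exact mem_Dof.mpr ⟨0, rfl⟩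
    obtain ⟨j, hj⟩ := mem_Dof.mp hlmem
    have hja : aseq (m + 1) k j = aseq (m + 1) l 0 := congrArg Prod.fst hj
    have hjb : bseq (m + 1) k j = bseq (m + 1) l 0 := congrArg Prod.snd hj
    rw [← h0m, hDeq] at hc1l
    have hbj : bseq (m + 1) k j + 1 = (col (Dof (m + 1) k) (aseq (m + 1) k j)).card
        + (col (Dof (m + 1) k) (aseq (m + 1) k j + 1)).card := by
      rw [hja, hjb]; exact hc1l
    have hle2 : aseq (m + 1) k ⟨0, Nat.succ_pos m⟩ ≤ aseq (m + 1) l 0 := by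
      rw [← hja]; exact claim2 hk (Nat.succ_pos m) j hbj
    rw [← h0m] at hle1 hle2
    have haeq : aseq (m + 1) l 0 = aseq (m + 1) k 0 := le_antisymm hle1 hle2
    -- b equal
    have hbeq : bseq (m + 1) l 0 = bseq (m + 1) k 0 := by
      have hc1k' := claim1 hk (Nat.succ_pos m)
      rw [← h0m] at hc1k'
      rw [haeq] at hc1l
      omega
    -- l 0 = k 0
    have hsl := sumAC hl 0
    have hsk := sumAC hk 0
    have hv0 : ((0 : Fin (m + 1))).val = 0 := rfl
    have h00 : l 0 = k 0 := by omega
    -- tails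
    have htail : Dof m (tl l) = Dof m (tl k) := by
      have h1 := Dof_succ l
      have h2 := Dof_succ k
      rw [h1, h2, haeq, hbeq] at hDeq
      have hnl := head_notmem hl
      have hnk := head_notmem hk
      rw [haeq, hbeq] at hnl
      calc Dof m (tl l) = (insert (aseq (m+1) k 0, bseq (m+1) k 0) (Dof m (tl l))).erase
            (aseq (m+1) k 0, bseq (m+1) k 0) := (Finset.erase_insert hnl).symm
        _ = (insert (aseq (m+1) k 0, bseq (m+1) k 0) (Dof m (tl k))).erase
            (aseq (m+1) k 0, bseq (m+1) k 0) := by rw [hDeq]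
        _ = Dof m (tl k) := Finset.erase_insert hnk
    have := IH (tl l) (tl k) (tl_isLambda hl) (tl_isLambda hk) htail
    funext i
    induction i using Fin.cases with
    | zero => exact h00
    | succ i => exact congrFun this i

end Stmt5Aux

/-- The map `θ : Λ_n → 𝔇_n^{catalan}`, `λ ↦ D(λ)`, is a bijection. -/
theorem stmt5 (n : ℕ) (hn : 1 ≤ n) :
    Set.BijOn (fun l => Dof n l) {l : Fin n → ℕ | IsLambda n l}
      {D : Finset (ℕ × ℕ) | IsCat n D} := by
  refine ⟨?_, ?_, ?_⟩
  · intro l hl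
    exact Stmt5Aux.mapsTo hl hn
  · intro l1 h1 l2 h2 he
    exact Stmt5Aux.inj n hn l1 l2 h1 h2 he
  · intro D hD
    obtain ⟨l, hl, hDl⟩ := Stmt5Aux.surj n hn D hD
    exact ⟨l, hl, hDl⟩
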